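/- Let 0 < β̃ ≤ 1, R > 0, c_min > 0, and let ρ be a continuous probability density on [0,1]² satisfying ρ(x) ≥ c_min for all x ∈ [0,1]² and |ρ(x) − ρ(y)| ≤ R ‖x − y‖₂^{β̃} for all x, y ∈ [0,1]². For an integer n ≥ 1, let ρ̄ be the piecewise constant density defined on each grid cell S_{ij} = [(i−1)/n, i/n) × [(j−1)/n, j/n) by ρ̄(x) = n² ∫_{S_{ij}} ρ(y) dy for x ∈ S_{ij}. Then h²(ρ̄, ρ) = ∫_{[0,1]²} (√ρ̄(x) − √ρ(x))² dx ≤ 2 R² n^{−2β̃} / c_min. -/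

import Mathlib

open MeasureTheory

noncomputable section

/-- The unit square `[0,1]² ⊆ ℝ²`. -/
def unitSq : Set (ℝ × ℝ) := Set.Icc (0 : ℝ) 1 ×ˢ Set.Icc (0 : ℝ) 1

/-- The grid cell `S_{ij}` of the equidistant `n × n` grid on `[0,1]²` containing `x`. -/
def cellOf (n : ℕ) (x : ℝ × ℝ) : Set (ℝ × ℝ) :=
  Set.Ico ((⌊x.1 * n⌋ : ℝ) / n) (((⌊x.1 * n⌋ : ℝ) + 1) / n) ×ˢ
    Set.Ico ((⌊x.2 * n⌋ : ℝ) / n) (((⌊x.2 * n⌋ : ℝ) + 1) / n)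

lemma measurableSet_unitSq : MeasurableSet unitSq :=
  measurableSet_Icc.prod measurableSet_Icc

lemma isCompact_unitSq : IsCompact unitSq :=
  isCompact_Icc.prod isCompact_Icc

lemma measurableSet_cellOf (n : ℕ) (x : ℝ × ℝ) : MeasurableSet (cellOf n x) :=
  measurableSet_Ico.prod measurableSet_Ico

lemma volume_unitSq : volume unitSq = 1 := by
  rw [unitSq, show (volume : Measure (ℝ × ℝ)) = (volume : Measure ℝ).prod volume from rfl,
    Measure.prod_prod, Real.volume_Icc]
  norm_num

lemma volume_cellOf (n : ℕ) (hn : 1 ≤ n) (x : ℝ × ℝ) :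
    volume (cellOf n x) = ENNReal.ofReal ((1 : ℝ) / n ^ 2) := by
  have hn' : (0 : ℝ) < n := by exact_mod_cast hn
  rw [cellOf, show (volume : Measure (ℝ × ℝ)) = (volume : Measure ℝ).prod volume from rfl,
    Measure.prod_prod, Real.volume_Ico, Real.volume_Ico]
  have h1 : ∀ a : ℝ, (a + 1) / n - a / n = 1 / n := by intro a; field_simp; ring
  rw [h1, h1, ← ENNReal.ofReal_mul (by positivity)]
  congr 1
  field_simp

/-- Key algebraic fact about square roots. -/
lemma sqrt_diff_sq_le {a b c : ℝ} (hc : 0 < c) (ha : c ≤ a) (hb : c ≤ b) :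
    (Real.sqrt a - Real.sqrt b) ^ 2 ≤ (a - b) ^ 2 / c := by
  have h0a : 0 ≤ a := le_trans hc.le ha
  have h0b : 0 ≤ b := le_trans hc.le hb
  have hsa : Real.sqrt a ^ 2 = a := Real.sq_sqrt h0a
  have hsb : Real.sqrt b ^ 2 = b := Real.sq_sqrt h0b
  have hsc : Real.sqrt c ^ 2 = c := Real.sq_sqrt hc.le
  have h1 : Real.sqrt c ≤ Real.sqrt a := Real.sqrt_le_sqrt ha
  have h2 : Real.sqrt c ≤ Real.sqrt b := Real.sqrt_le_sqrt hb
  have hscpos : 0 < Real.sqrt c := Real.sqrt_pos.2 hc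
  rw [le_div_iff₀ hc]
  have key : c ≤ (Real.sqrt a + Real.sqrt b) ^ 2 := by nlinarith
  have hprod : (Real.sqrt a - Real.sqrt b) ^ 2 * (Real.sqrt a + Real.sqrt b) ^ 2
      = (a - b) ^ 2 := by
    calc (Real.sqrt a - Real.sqrt b) ^ 2 * (Real.sqrt a + Real.sqrt b) ^ 2
        = (Real.sqrt a ^ 2 - Real.sqrt b ^ 2) ^ 2 := by ring
      _ = (a - b) ^ 2 := by rw [hsa, hsb]
  calc (Real.sqrt a - Real.sqrt b) ^ 2 * c
      ≤ (Real.sqrt a - Real.sqrt b) ^ 2 * (Real.sqrt a + Real.sqrt b) ^ 2 :=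
        mul_le_mul_of_nonneg_left key (sq_nonneg _)
    _ = (a - b) ^ 2 := hprod

/-- The pointwise bound at interior points. -/
lemma pointwise_bound (β R cmin : ℝ) (hβ₀ : 0 < β) (hβ₁ : β ≤ 1)
    (hR : 0 < R) (hcmin : 0 < cmin) (ρ : ℝ × ℝ → ℝ)
    (hcont : ContinuousOn ρ unitSq)
    (hlb : ∀ z ∈ unitSq, cmin ≤ ρ z)
    (hhold : ∀ z ∈ unitSq, ∀ w ∈ unitSq,
      |ρ z - ρ w| ≤ R * Real.sqrt ((z.1 - w.1) ^ 2 + (z.2 - w.2) ^ 2) ^ β)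
    (n : ℕ) (hn : 1 ≤ n) (x : ℝ × ℝ)
    (hx1 : x.1 ∈ Set.Ico (0 : ℝ) 1) (hx2 : x.2 ∈ Set.Ico (0 : ℝ) 1) :
    (Real.sqrt ((n : ℝ) ^ 2 * ∫ y in cellOf n x, ρ y) - Real.sqrt (ρ x)) ^ 2
      ≤ 2 * R ^ 2 * (n : ℝ) ^ (-(2 * β)) / cmin := by
  have hn' : (0 : ℝ) < n := by exact_mod_cast hn
  -- the cell is contained in the unit square
  have hsub : cellOf n x ⊆ unitSq := by
    rintro ⟨y1, y2⟩ ⟨hy1, hy2⟩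
    have key : ∀ t : ℝ, t ∈ Set.Ico (0 : ℝ) 1 →
        ∀ s : ℝ, s ∈ Set.Ico ((⌊t * n⌋ : ℝ) / n) (((⌊t * n⌋ : ℝ) + 1) / n) →
        s ∈ Set.Icc (0 : ℝ) 1 := by
      rintro t ⟨ht0, ht1⟩ s ⟨hs0, hs1⟩
      have hfl0 : (0 : ℤ) ≤ ⌊t * n⌋ := Int.floor_nonneg.2 (mul_nonneg ht0 hn'.le)
      have hfl1 : ⌊t * n⌋ < (n : ℤ) := by
        rw [Int.floor_lt]
        push_cast
        nlinarith
      constructor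
      · have h0 : (0 : ℝ) ≤ (⌊t * n⌋ : ℝ) / n :=
          div_nonneg (by exact_mod_cast hfl0) hn'.le
        linarith
      · have h3 : ((⌊t * n⌋ : ℝ) + 1) / n ≤ 1 := by
          rw [div_le_one hn']
          have : (⌊t * n⌋ : ℝ) + 1 ≤ (n : ℝ) := by exact_mod_cast hfl1
          linarith
        linarith [hs1.le]
    exact ⟨key x.1 hx1 y1 hy1, key x.2 hx2 y2 hy2⟩
  have hxmem : x ∈ cellOf n x := by
    constructor <;>
    · constructor
      · rw [div_le_iff₀ hn']; exact Int.floor_le _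
      · rw [lt_div_iff₀ hn']; exact Int.lt_floor_add_one _
  have hxU : x ∈ unitSq := hsub hxmem
  -- integrability
  have hintU : IntegrableOn ρ unitSq := hcont.integrableOn_compact isCompact_unitSq
  have hintc : IntegrableOn ρ (cellOf n x) := hintU.mono_set hsub
  have hvolc : volume (cellOf n x) = ENNReal.ofReal ((1 : ℝ) / n ^ 2) :=
    volume_cellOf n hn x
  have hvolc_lt : volume (cellOf n x) < ⊤ := by rw [hvolc]; exact ENNReal.ofReal_lt_top
  have hvoltr : (volume (cellOf n x)).toReal = (1 : ℝ) / n ^ 2 := by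
    rw [hvolc, ENNReal.toReal_ofReal (by positivity)]
  -- the pointwise Hölder bound on the cell
  set C : ℝ := R * (Real.sqrt 2 / n) ^ (β : ℝ) with hC
  have hCpos : 0 < C := by
    apply mul_pos hR
    apply Real.rpow_pos_of_pos
    positivity
  have hholdC : ∀ y ∈ cellOf n x, |ρ y - ρ x| ≤ C := by
    intro y hy
    refine le_trans (hhold y (hsub hy) x hxU) ?_
    apply mul_le_mul_of_nonneg_left _ hR.le
    apply Real.rpow_le_rpow (Real.sqrt_nonneg _) _ hβ₀.le
    have hd2 : (y.1 - x.1) ^ 2 + (y.2 - x.2) ^ 2 ≤ 2 / n ^ 2 := by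
      have key : ∀ a b c : ℝ, a ∈ Set.Ico (c / n) ((c + 1) / n) →
          b ∈ Set.Ico (c / n) ((c + 1) / n) → (a - b) ^ 2 ≤ 1 / n ^ 2 := by
        rintro a b c ⟨ha0, ha1⟩ ⟨hb0, hb1⟩
        have h1 : (c + 1) / n - c / n = 1 / n := by field_simp; ring
        have h2 : |a - b| ≤ 1 / n := by
          rw [abs_le]; constructor <;> nlinarith
        calc (a - b) ^ 2 = |a - b| ^ 2 := (sq_abs _).symm
          _ ≤ (1 / n) ^ 2 := by nlinarith [abs_nonneg (a - b)]
          _ = 1 / n ^ 2 := by ring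
      have k1 := key y.1 x.1 _ hy.1 hxmem.1
      have k2 := key y.2 x.2 _ hy.2 hxmem.2
      have h2n : (2 : ℝ) / n ^ 2 = 1 / (n:ℝ) ^ 2 + 1 / (n:ℝ) ^ 2 := by ring
      rw [h2n]
      exact add_le_add k1 k2
    calc Real.sqrt ((y.1 - x.1) ^ 2 + (y.2 - x.2) ^ 2) ≤ Real.sqrt (2 / n ^ 2) :=
          Real.sqrt_le_sqrt hd2
      _ = Real.sqrt 2 / n := by
          rw [show (2 : ℝ) / n ^ 2 = (Real.sqrt 2 / n) ^ 2 by
            rw [div_pow, Real.sq_sqrt (by norm_num : (0:ℝ) ≤ 2)]]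
          exact Real.sqrt_sq (by positivity)
  -- bound on the difference between the cell average and ρ x
  set a : ℝ := (n : ℝ) ^ 2 * ∫ y in cellOf n x, ρ y with ha
  have hdiff_int : (∫ y in cellOf n x, (ρ y - ρ x)) =
      (∫ y in cellOf n x, ρ y) - ρ x / n ^ 2 := by
    rw [integral_sub hintc (integrableOn_const hvolc_lt.ne),
      setIntegral_const, measureReal_def, hvoltr, smul_eq_mul]
    ring
  have hbound : |a - ρ x| ≤ C := by
    have h1 : ‖∫ y in cellOf n x, (ρ y - ρ x)‖ ≤ C * (volume (cellOf n x)).toReal :=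
      norm_setIntegral_le_of_norm_le_const_ae' hvolc_lt
        (Filter.Eventually.of_forall fun y hy => by
          rw [Real.norm_eq_abs]; exact hholdC y hy)
    rw [Real.norm_eq_abs, hdiff_int, hvoltr] at h1
    have h2 : a - ρ x = (n : ℝ) ^ 2 * ((∫ y in cellOf n x, ρ y) - ρ x / n ^ 2) := by
      rw [ha]; field_simp
    rw [h2, abs_mul, abs_of_nonneg (by positivity : (0:ℝ) ≤ (n:ℝ) ^ 2)]
    calc (n : ℝ) ^ 2 * |(∫ y in cellOf n x, ρ y) - ρ x / n ^ 2|
        ≤ (n : ℝ) ^ 2 * (C * (1 / n ^ 2)) := by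
          apply mul_le_mul_of_nonneg_left h1 (by positivity)
      _ = C := by field_simp
  -- lower bounds
  have hρx : cmin ≤ ρ x := hlb x hxU
  have hacmin : cmin ≤ a := by
    have h1 : (∫ y in cellOf n x, (cmin : ℝ)) ≤ ∫ y in cellOf n x, ρ y := by
      apply setIntegral_mono_on (integrableOn_const hvolc_lt.ne) hintc
        (measurableSet_cellOf n x)
      intro y hy
      exact hlb y (hsub hy)
    rw [setIntegral_const, measureReal_def, hvoltr, smul_eq_mul] at h1
    rw [ha]
    calc cmin = (n : ℝ) ^ 2 * (1 / n ^ 2 * cmin) := by field_simp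
      _ ≤ (n : ℝ) ^ 2 * ∫ y in cellOf n x, ρ y := by
          apply mul_le_mul_of_nonneg_left h1 (by positivity)
  -- the exponent computation
  have hexp : ((Real.sqrt 2 / n) ^ (β : ℝ)) ^ 2 ≤ 2 * (n : ℝ) ^ (-(2 * β)) := by
    have ht : (0 : ℝ) ≤ Real.sqrt 2 / n := by positivity
    have h1 : ((Real.sqrt 2 / n) ^ (β : ℝ)) ^ (2 : ℕ) = (Real.sqrt 2 / n) ^ (β * 2) := by
      rw [← Real.rpow_natCast ((Real.sqrt 2 / n) ^ (β : ℝ)) 2, ← Real.rpow_mul ht]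
      norm_num
    rw [h1, Real.div_rpow (Real.sqrt_nonneg 2) hn'.le]
    have h2 : Real.sqrt 2 ^ (β * 2) = (2 : ℝ) ^ β := by
      rw [show Real.sqrt 2 = (2 : ℝ) ^ ((1 : ℝ) / 2) from Real.sqrt_eq_rpow 2,
        ← Real.rpow_mul (by norm_num : (0:ℝ) ≤ 2)]
      ring_nf
    have h3 : (n : ℝ) ^ (β * 2) = (n : ℝ) ^ (2 * β) := by rw [mul_comm]
    have h4 : (2 : ℝ) ^ β ≤ 2 := by
      calc (2 : ℝ) ^ β ≤ (2 : ℝ) ^ (1 : ℝ) :=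
            Real.rpow_le_rpow_of_exponent_le (by norm_num) hβ₁
        _ = 2 := Real.rpow_one 2
    have h5 : (n : ℝ) ^ (-(2 * β)) = ((n : ℝ) ^ (2 * β))⁻¹ := Real.rpow_neg hn'.le _
    have h6 : 0 < (n : ℝ) ^ (2 * β) := Real.rpow_pos_of_pos hn' _
    rw [h2, h3, h5, div_eq_mul_inv]
    exact mul_le_mul_of_nonneg_right h4 (inv_nonneg.2 h6.le)
  -- put it together
  have hsq : (a - ρ x) ^ 2 ≤ C ^ 2 := by
    have := abs_le.mp hbound
    nlinarith
  calc (Real.sqrt a - Real.sqrt (ρ x)) ^ 2 ≤ (a - ρ x) ^ 2 / cmin :=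
        sqrt_diff_sq_le hcmin hacmin hρx
    _ ≤ C ^ 2 / cmin := by gcongr
    _ = R ^ 2 * ((Real.sqrt 2 / n) ^ (β : ℝ)) ^ 2 / cmin := by rw [hC]; ring
    _ ≤ R ^ 2 * (2 * (n : ℝ) ^ (-(2 * β))) / cmin := by gcongr
    _ = 2 * R ^ 2 * (n : ℝ) ^ (-(2 * β)) / cmin := by ring

theorem piecewise_constant_bias (β R cmin : ℝ) (hβ₀ : 0 < β) (hβ₁ : β ≤ 1)
    (hR : 0 < R) (hcmin : 0 < cmin) (ρ : ℝ × ℝ → ℝ)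
    (hcont : ContinuousOn ρ unitSq)
    (hint : (∫ z in unitSq, ρ z) = 1)
    (hlb : ∀ z ∈ unitSq, cmin ≤ ρ z)
    (hhold : ∀ z ∈ unitSq, ∀ w ∈ unitSq,
      |ρ z - ρ w| ≤ R * Real.sqrt ((z.1 - w.1) ^ 2 + (z.2 - w.2) ^ 2) ^ β)
    (n : ℕ) (hn : 1 ≤ n) :
    (∫ x in unitSq,
        (Real.sqrt ((n : ℝ) ^ 2 * ∫ y in cellOf n x, ρ y) - Real.sqrt (ρ x)) ^ 2)
      ≤ 2 * R ^ 2 * (n : ℝ) ^ (-(2 * β)) / cmin := by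
  set Cst : ℝ := 2 * R ^ 2 * (n : ℝ) ^ (-(2 * β)) / cmin with hCst
  set f : ℝ × ℝ → ℝ := fun x =>
    (Real.sqrt ((n : ℝ) ^ 2 * ∫ y in cellOf n x, ρ y) - Real.sqrt (ρ x)) ^ 2 with hf
  -- the set of bad boundary points is null
  have hnull : volume ({x : ℝ × ℝ | x.1 = 1} ∪ {x : ℝ × ℝ | x.2 = 1}) = 0 := by
    apply measure_union_null
    · have h : {x : ℝ × ℝ | x.1 = 1} = ({1} : Set ℝ) ×ˢ (Set.univ : Set ℝ) := by
        ext ⟨a, b⟩; simp [eq_comm]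
      rw [h, show (volume : Measure (ℝ × ℝ)) = (volume : Measure ℝ).prod volume from rfl,
        Measure.prod_prod]
      simp
    · have h : {x : ℝ × ℝ | x.2 = 1} = (Set.univ : Set ℝ) ×ˢ ({1} : Set ℝ) := by
        ext ⟨a, b⟩; simp [eq_comm]
      rw [h, show (volume : Measure (ℝ × ℝ)) = (volume : Measure ℝ).prod volume from rfl,
        Measure.prod_prod]
      simp
  have hae : ∀ᵐ x ∂(volume : Measure (ℝ × ℝ)), x ∈ unitSq → ‖f x‖ ≤ Cst := by
    have hnm : ∀ᵐ x ∂(volume : Measure (ℝ × ℝ)),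
        x ∉ ({x : ℝ × ℝ | x.1 = 1} ∪ {x : ℝ × ℝ | x.2 = 1}) :=
      measure_eq_zero_iff_ae_notMem.mp hnull
    filter_upwards [hnm] with x hx hxU
    have hx1 : x.1 ∈ Set.Ico (0 : ℝ) 1 := by
      refine ⟨hxU.1.1, lt_of_le_of_ne hxU.1.2 ?_⟩
      intro h; exact hx (Or.inl h)
    have hx2 : x.2 ∈ Set.Ico (0 : ℝ) 1 := by
      refine ⟨hxU.2.1, lt_of_le_of_ne hxU.2.2 ?_⟩
      intro h; exact hx (Or.inr h)
    rw [Real.norm_eq_abs, abs_of_nonneg (sq_nonneg _)]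
    exact pointwise_bound β R cmin hβ₀ hβ₁ hR hcmin ρ hcont hlb hhold n hn x hx1 hx2
  have hvolU : volume unitSq < ⊤ := by rw [volume_unitSq]; exact ENNReal.one_lt_top
  have h := norm_setIntegral_le_of_norm_le_const_ae' hvolU hae
  rw [measureReal_def, volume_unitSq, ENNReal.toReal_one, mul_one, Real.norm_eq_abs] at h
  exact le_trans (le_abs_self _) h
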